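/- arXiv:quant-ph/9608006 — 2 statements merged into one kernel-verified Lean document; each statement's English description precedes it below -/
import Mathlib

section
/- Let C ⊆ GF(4)ⁿ be a GF(4)-linear self-orthogonal code with |C| = 2^{n−k} such that every vector of C⊥ ∖ C has Hamming weight at least d. Let B ⊆ 𝔽₂ⁿ be the binary linear code spanned by the supports of the codewords of C, where the support of a codeword is its indicator vector of nonzero coordinates. If the Euclidean dual of B contains a word of weight m, then there exists a GF(4)-linear self-orthogonal code D ⊆ GF(4)^{n−m} with |D| ≤ 2^{n−k} such that every vector of D⊥ ∖ D has Hamming weight at least d. (There exists a linear [[n−m, k', d']] code with k' ≥ k − m and d' ≥ d.) -/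
noncomputable section

open Finset Polynomial

/-- The field `GF(4)` with four elements. -/
abbrev F4 := GaloisField 2 2

/-- The trace inner product `u∗v = Σⱼ (uⱼ v̄ⱼ + ūⱼ vⱼ)` on `GF(4)ⁿ`,
where conjugation is `x̄ = x²`.  It takes values in the prime subfield. -/
def trIP {n : ℕ} (u v : Fin n → F4) : F4 :=
  ∑ j, (u j * (v j) ^ 2 + (u j) ^ 2 * v j)

/-- The Hamming weight of a vector in `GF(4)ⁿ`. -/
def wt {n : ℕ} (u : Fin n → F4) : ℕ := Set.ncard {j | u j ≠ 0}

/-- The dual of a code with respect to the trace inner product. -/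
def trDual {n : ℕ} (C : Set (Fin n → F4)) : Set (Fin n → F4) :=
  {u | ∀ v ∈ C, trIP u v = 0}

open Classical in
/-- The binary support indicator vector of a codeword. -/
def binSupp {n : ℕ} (u : Fin n → F4) : Fin n → ZMod 2 :=
  fun j => if u j = 0 then 0 else 1

lemma F4.cube_eq_one (x : F4) (hx : x ≠ 0) : x ^ 3 = 1 := by
  have : Fintype F4 := Fintype.ofFinite F4
  have h := FiniteField.pow_card_sub_one_eq_one x hx
  rw [← Nat.card_eq_fintype_card, GaloisField.card 2 2 (by norm_num)] at h
  norm_num at h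
  exact h

lemma F4.two_eq_zero : (2 : F4) = 0 := by
  have := CharP.cast_eq_zero F4 2; exact_mod_cast this

lemma ZMod.two_ne_zero_eq_one (x : ZMod 2) (h : x ≠ 0) : x = 1 := by
  revert h; revert x; decide

/-- Shortening a linear [[n,k,d]] code on the support of a weight-m word of
the dual of the binary code generated by the supports yields a linear
[[n-m, k', d']] code with k' ≥ k-m and d' ≥ d. -/
theorem linear_shorten_by_support_dual (n k d m : ℕ) (hk : k ≤ n)
    (C : Submodule F4 (Fin n → F4))
    (hso : ∀ u ∈ C, ∀ v ∈ C, trIP u v = 0)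
    (hcard : Nat.card C = 2 ^ (n - k))
    (hd : ∀ v ∈ trDual (C : Set (Fin n → F4)) \ (C : Set (Fin n → F4)), d ≤ wt v)
    (w : Fin n → ZMod 2)
    (hw : ∀ b ∈ Submodule.span (ZMod 2) (binSupp '' (C : Set (Fin n → F4))),
      ∑ j, w j * b j = 0)
    (hwm : Set.ncard {j | w j ≠ 0} = m) :
    ∃ D : Submodule F4 (Fin (n - m) → F4),
      (∀ u ∈ D, ∀ v ∈ D, trIP u v = 0) ∧
      Nat.card D ≤ 2 ^ (n - k) ∧
      ∀ v ∈ trDual (D : Set (Fin (n - m) → F4)) \ (D : Set (Fin (n - m) → F4)), d ≤ wt v := by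
  classical
  -- `S` is the support of `w`.
  set S : Finset (Fin n) := Finset.univ.filter (fun j => w j ≠ 0) with hSdef
  have hSm : S.card = m := by
    rw [← hwm]
    have : {j | w j ≠ 0} = (S : Set (Fin n)) := by ext j; simp [hSdef]
    rw [this, Set.ncard_coe_finset]
  -- Step 1: every codeword meets `S` evenly:  `∑_{j ∈ S} (c j)^3 = 0` in `F4`.
  have hA : ∀ c ∈ C, ∑ j ∈ S, (c j) ^ 3 = 0 := by
    intro c hc
    have hb : binSupp c ∈ Submodule.span (ZMod 2) (binSupp '' (C : Set (Fin n → F4))) :=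
      Submodule.subset_span ⟨c, hc, rfl⟩
    have h1 : ∑ j, ((ZMod.castHom (dvd_refl 2) F4) (w j * binSupp c j)) = 0 := by
      rw [← map_sum, hw _ hb, map_zero]
    have h2 : ∑ j ∈ S, ((ZMod.castHom (dvd_refl 2) F4) (w j * binSupp c j)) =
        ∑ j, ((ZMod.castHom (dvd_refl 2) F4) (w j * binSupp c j)) := by
      refine Finset.sum_subset (Finset.subset_univ S) ?_
      intro j _ hj
      have hwj : w j = 0 := by
        by_contra h; exact hj (by simp [hSdef, h])
      rw [hwj]; simp
    have h3 : ∀ j ∈ S, ((ZMod.castHom (dvd_refl 2) F4) (w j * binSupp c j)) = (c j) ^ 3 := by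
      intro j hj
      have hwj1 : w j = 1 := ZMod.two_ne_zero_eq_one _ (by simpa [hSdef] using hj)
      rw [hwj1, one_mul]
      by_cases hcj : c j = 0
      · simp [binSupp, hcj]
      · rw [F4.cube_eq_one _ hcj]; simp [binSupp, hcj]
    calc ∑ j ∈ S, (c j) ^ 3
        = ∑ j ∈ S, ((ZMod.castHom (dvd_refl 2) F4) (w j * binSupp c j)) :=
          (Finset.sum_congr rfl h3).symm
      _ = 0 := by rw [h2, h1]
  -- Step 2 (polarization): the `S`-part of the trace form vanishes on `C`.
  have hB : ∀ c ∈ C, ∀ c' ∈ C,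
      ∑ j ∈ S, (c j * (c' j) ^ 2 + (c j) ^ 2 * c' j) = 0 := by
    intro c hc c' hc'
    have key : ∀ x y : F4, x * y ^ 2 + x ^ 2 * y = (x + y) ^ 3 - x ^ 3 - y ^ 3 := by
      intro x y
      linear_combination (-(x ^ 2 * y) - x * y ^ 2) * F4.two_eq_zero
    have h3 := hA (c + c') (C.add_mem hc hc')
    have h1 := hA c hc
    have h2 := hA c' hc'
    calc ∑ j ∈ S, (c j * (c' j) ^ 2 + (c j) ^ 2 * c' j)
        = ∑ j ∈ S, (((c + c') j) ^ 3 - (c j) ^ 3 - (c' j) ^ 3) := by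
          refine Finset.sum_congr rfl fun j _ => ?_
          simp only [Pi.add_apply]; exact key (c j) (c' j)
      _ = (∑ j ∈ S, ((c + c') j) ^ 3) - (∑ j ∈ S, (c j) ^ 3) - (∑ j ∈ S, (c' j) ^ 3) := by
          rw [Finset.sum_sub_distrib, Finset.sum_sub_distrib]
      _ = 0 := by rw [h1, h2, h3]; ring
  -- Hence the `Sᶜ`-part of the trace form also vanishes on `C`.
  have hBc : ∀ c ∈ C, ∀ c' ∈ C,
      ∑ j ∈ Sᶜ, (c j * (c' j) ^ 2 + (c j) ^ 2 * c' j) = 0 := by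
    intro c hc c' hc'
    have hsplit := Finset.sum_add_sum_compl S (fun j => (c j * (c' j) ^ 2 + (c j) ^ 2 * c' j))
    have htot : ∑ j, (c j * (c' j) ^ 2 + (c j) ^ 2 * c' j) = 0 := hso c hc c' hc'
    rw [hB c hc c' hc', htot, zero_add] at hsplit
    exact hsplit
  -- The coordinates off `S`, enumerated by `Fin (n - m)`.
  have hSc : Sᶜ.card = n - m := by
    rw [Finset.card_compl, hSm, Fintype.card_fin]
  let e0 := Sᶜ.orderIsoOfFin hSc
  let e : Fin (n - m) → Fin n := fun i => (e0 i : Fin n)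
  have he : Function.Injective e := fun i i' h => e0.injective (Subtype.ext h)
  have heS : ∀ i, e i ∈ Sᶜ := fun i => (e0 i).2
  have heSurj : ∀ j ∈ Sᶜ, ∃ i, e i = j := by
    intro j hj
    exact ⟨e0.symm ⟨j, hj⟩, by simp [e]⟩
  -- The punctured code `D`.
  let P : (Fin n → F4) →ₗ[F4] (Fin (n - m) → F4) := LinearMap.funLeft F4 F4 e
  refine ⟨Submodule.map P C, ?_, ?_, ?_⟩
  · -- self-orthogonality
    rintro u ⟨c, hc, rfl⟩ v ⟨c', hc', rfl⟩
    have hbij : ∑ i : Fin (n - m), ((c (e i)) * (c' (e i)) ^ 2 + (c (e i)) ^ 2 * c' (e i)) =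
        ∑ j ∈ Sᶜ, (c j * (c' j) ^ 2 + (c j) ^ 2 * c' j) := by
      refine Finset.sum_bij (fun i _ => e i) (fun i _ => heS i)
        (fun i _ i' _ h => he h) (fun j hj => ?_) (fun i _ => rfl)
      obtain ⟨i, hi⟩ := heSurj j hj
      exact ⟨i, Finset.mem_univ i, hi⟩
    simpa [trIP, P, LinearMap.funLeft_apply] using hbij.trans (hBc c hc c' hc')
  · -- cardinality
    have hfin : Finite C := Nat.finite_of_card_ne_zero (by rw [hcard]; positivity)
    have hsurj : Function.Surjective
        (fun c : C => (⟨P c, Submodule.mem_map_of_mem c.2⟩ : Submodule.map P C)) := by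
      rintro ⟨_, c, hc, rfl⟩
      exact ⟨⟨c, hc⟩, rfl⟩
    calc Nat.card (Submodule.map P C) ≤ Nat.card C :=
          Nat.card_le_card_of_surjective _ hsurj
      _ = 2 ^ (n - k) := hcard
  · -- minimum distance
    rintro v ⟨hv1, hv2⟩
    set vt : Fin n → F4 := Function.extend e v (fun _ => 0) with hvtdef
    have hvte : ∀ i, vt (e i) = v i := fun i => he.extend_apply _ _ i
    have hvt0 : ∀ j, (¬∃ i, e i = j) → vt j = 0 := fun j hj =>
      Function.extend_apply' _ _ _ hj
    -- `vt` is in the trace dual of `C`.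
    have hvtC : vt ∈ trDual (C : Set (Fin n → F4)) := by
      intro c hc
      have hsplit := Finset.sum_add_sum_compl Sᶜ
        (fun j => (vt j * (c j) ^ 2 + (vt j) ^ 2 * c j))
      have hbij : ∑ j ∈ Sᶜ, (vt j * (c j) ^ 2 + (vt j) ^ 2 * c j) =
          ∑ i : Fin (n - m), (v i * (c (e i)) ^ 2 + (v i) ^ 2 * c (e i)) := by
        refine (Finset.sum_bij (fun i (_ : i ∈ Finset.univ) => e i) (fun i _ => heS i)
          (fun i _ i' _ h => he h) (fun j hj => ?_) (fun i _ => by rw [hvte])).symm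
        obtain ⟨i, hi⟩ := heSurj j hj
        exact ⟨i, Finset.mem_univ i, hi⟩
      have hD : ∑ i : Fin (n - m), (v i * (c (e i)) ^ 2 + (v i) ^ 2 * c (e i)) = 0 := by
        have := hv1 (P c) (Submodule.mem_map_of_mem hc)
        simpa [trIP, P, LinearMap.funLeft_apply] using this
      have hzero : ∑ j ∈ Sᶜᶜ, (vt j * (c j) ^ 2 + (vt j) ^ 2 * c j) = 0 := by
        refine Finset.sum_eq_zero fun j hj => ?_
        have hjS : j ∈ S := by simpa using hj
        have : vt j = 0 := by
          refine hvt0 j ?_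
          rintro ⟨i, rfl⟩
          exact (Finset.mem_compl.mp (heS i)) hjS
        rw [this]; ring
      rw [hbij, hD, hzero, zero_add] at hsplit
      unfold trIP
      exact hsplit.symm
    -- `vt` is not in `C`.
    have hvtnC : vt ∉ (C : Set (Fin n → F4)) := by
      intro hvtC'
      apply hv2
      have : P vt = v := by
        funext i
        simp [P, LinearMap.funLeft_apply, hvte]
      exact this ▸ Submodule.mem_map_of_mem hvtC'
    -- weight is preserved
    have hwt : wt vt = wt v := by
      unfold wt
      have himg : {j | vt j ≠ 0} = e '' {i | v i ≠ 0} := by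
        ext j
        constructor
        · intro hj
          by_cases h : ∃ i, e i = j
          · obtain ⟨i, rfl⟩ := h
            exact ⟨i, by rw [Set.mem_setOf_eq, ← hvte i]; exact hj, rfl⟩
          · exact absurd (hvt0 j h) hj
        · rintro ⟨i, hi, rfl⟩
          rw [Set.mem_setOf_eq, hvte]
          exact hi
      rw [himg, Set.ncard_image_of_injective _ he]
    have := hd vt ⟨hvtC, hvtnC⟩
    rwa [hwt] at this
end
end

section
/- Let n ≥ 1 and let C ⊆ GF(4)ⁿ be an additive self-orthogonal code with |C| = 2^{n−k} (0 ≤ k ≤ n) such that every nonzero vector of C⊥ has Hamming weight at least d (a pure code). Then k ≤ n − 2d + 2. (A pure [[n,k,d]] quantum code satisfies k ≤ n − 2d + 2.) -/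
noncomputable section

open Finset Polynomial

instance : Fintype F4 := Fintype.ofFinite F4

lemma F4_card : Fintype.card F4 = 4 := by
  have h := GaloisField.card 2 2 (two_ne_zero)
  norm_num at h ⊢
  convert h

lemma F4_pow4 (x : F4) : x ^ 4 = x := by
  have := FiniteField.pow_card x
  rwa [F4_card] at this

lemma F4_sq_add (a b : F4) : (a + b) ^ 2 = a ^ 2 + b ^ 2 := CharTwo.add_sq a b

lemma trIP_add_left {n : ℕ} (u w v : Fin n → F4) :
    trIP (u + w) v = trIP u v + trIP w v := by
  unfold trIP
  rw [← Finset.sum_add_distrib]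
  refine Finset.sum_congr rfl fun j _ => ?_
  simp only [Pi.add_apply, F4_sq_add]
  ring

lemma trIP_add_right {n : ℕ} (u v w : Fin n → F4) :
    trIP u (v + w) = trIP u v + trIP u w := by
  unfold trIP
  rw [← Finset.sum_add_distrib]
  refine Finset.sum_congr rfl fun j _ => ?_
  simp only [Pi.add_apply, CharTwo.add_sq]
  ring

lemma trIP_sq {n : ℕ} (u v : Fin n → F4) : (trIP u v) ^ 2 = trIP u v := by
  unfold trIP
  rw [show ((∑ j, (u j * (v j) ^ 2 + (u j) ^ 2 * v j)) ^ 2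
      = ∑ j, (u j * (v j) ^ 2 + (u j) ^ 2 * v j) ^ 2) from
    map_sum (frobenius F4 2) _ _]
  refine Finset.sum_congr rfl fun j _ => ?_
  rw [CharTwo.add_sq, mul_pow, mul_pow, ← pow_mul, ← pow_mul]
  norm_num
  rw [F4_pow4, F4_pow4]
  ring

lemma trIP_mem {n : ℕ} (u v : Fin n → F4) : trIP u v = 0 ∨ trIP u v = 1 := by
  have h := trIP_sq u v
  have : trIP u v * (trIP u v - 1) = 0 := by rw [mul_sub, ← pow_two, h]; ring
  rcases mul_eq_zero.mp this with h' | h'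
  · exact Or.inl h'
  · exact Or.inr (by linear_combination h')

open scoped Classical in
def T2 : F4 → ZMod 2 := fun x => if x = 0 then 0 else 1

lemma T2_eq_zero_iff {x : F4} : T2 x = 0 ↔ x = 0 := by
  unfold T2
  split
  · simp_all
  · simp_all [show (1 : ZMod 2) ≠ 0 by decide]

lemma T2_add {x y : F4} (hx : x = 0 ∨ x = 1) (hy : y = 0 ∨ y = 1) :
    T2 (x + y) = T2 x + T2 y := by
  rcases hx with h | h <;> rcases hy with h' | h' <;> subst h <;> subst h' <;>
    simp [T2, CharTwo.add_self_eq_zero]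

lemma card_trDual_ge (n k : ℕ) (hk : k ≤ n) (C : AddSubgroup (Fin n → F4))
    (hcard : Nat.card C = 2 ^ (n - k)) :
    2 ^ (n + k) ≤ Nat.card (trDual (C : Set (Fin n → F4))) := by
  classical
  let V := (Fin n → F4)
  let C' : Submodule (ZMod 2) V := AddSubgroup.toZModSubmodule 2 C
  -- the inner additive map
  let g : V → (C' →+ ZMod 2) := fun u => AddMonoidHom.mk'
    (fun v => T2 (trIP u (v : V)))
    (fun v w => by
      have : trIP u ((v + w : C') : V) = trIP u (v : V) + trIP u (w : V) := by
        rw [Submodule.coe_add, trIP_add_right]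
      show T2 (trIP u ((v + w : C') : V)) = T2 (trIP u (v : V)) + T2 (trIP u (w : V))
      rw [this, T2_add (trIP_mem _ _) (trIP_mem _ _)])
  let Φ : V →ₗ[ZMod 2] Module.Dual (ZMod 2) C' :=
    AddMonoidHom.toZModLinearMap 2 (AddMonoidHom.mk'
      (fun u => AddMonoidHom.toZModLinearMap 2 (g u))
      (fun u w => by
        ext v
        show T2 (trIP (u + w) (v : V)) = T2 (trIP u (v : V)) + T2 (trIP w (v : V))
        rw [trIP_add_left, T2_add (trIP_mem _ _) (trIP_mem _ _)]))
  have hker : trDual (C : Set V) = (LinearMap.ker Φ : Set V) := by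
    ext u
    constructor
    · intro hu
      simp only [SetLike.mem_coe, LinearMap.mem_ker]
      ext v
      show T2 (trIP u (v : V)) = 0
      rw [T2_eq_zero_iff]
      exact hu (v : V) v.2
    · intro hu v hv
      simp only [SetLike.mem_coe, LinearMap.mem_ker] at hu
      have := congrFun (congrArg DFunLike.coe hu) ⟨v, hv⟩
      rw [← T2_eq_zero_iff]
      exact this
  have hF4 : Module.finrank (ZMod 2) F4 = 2 := GaloisField.finrank 2 (by norm_num)
  have finV : Module.finrank (ZMod 2) V = 2 * n := by
    rw [Module.finrank_pi_fintype]
    simp [hF4, Finset.sum_const, mul_comm]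
  have hcardC' : Nat.card C' = 2 ^ (n - k) := by rw [← hcard]; rfl
  have frC' : Module.finrank (ZMod 2) C' = n - k := by
    haveI : Fintype C' := Fintype.ofFinite _
    have h1 : Fintype.card C' = (Fintype.card (ZMod 2)) ^ Module.finrank (ZMod 2) C' :=
      Module.card_eq_pow_finrank
    rw [ZMod.card] at h1
    rw [Nat.card_eq_fintype_card, h1] at hcardC'
    exact Nat.pow_right_injective (le_refl 2) hcardC'
  have hrn := LinearMap.finrank_range_add_finrank_ker Φ
  have hrange : Module.finrank (ZMod 2) (LinearMap.range Φ) ≤ n - k := by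
    refine le_trans (Submodule.finrank_le _) ?_
    rw [Subspace.dual_finrank_eq, frC']
  have hkerge : n + k ≤ Module.finrank (ZMod 2) (LinearMap.ker Φ) := by
    rw [finV] at hrn; omega
  haveI : Fintype (LinearMap.ker Φ) := Fintype.ofFinite _
  have hcardker : Nat.card (LinearMap.ker Φ) =
      2 ^ Module.finrank (ZMod 2) (LinearMap.ker Φ) := by
    rw [Nat.card_eq_fintype_card, Module.card_eq_pow_finrank (K := ZMod 2), ZMod.card]
  calc 2 ^ (n + k) ≤ 2 ^ Module.finrank (ZMod 2) (LinearMap.ker Φ) :=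
        Nat.pow_le_pow_right (by norm_num) hkerge
    _ = Nat.card (LinearMap.ker Φ) := hcardker.symm
    _ = Nat.card (trDual (C : Set V)) := by rw [hker]; rfl

lemma trIP_sub_left {n : ℕ} (u w v : Fin n → F4) :
    trIP (u - w) v = trIP u v + trIP w v := by
  have h : u - w = u + w := funext fun j => CharTwo.sub_eq_add (u j) (w j)
  rw [h, trIP_add_left]


/-- Singleton bound for pure codes: a pure [[n,k,d]] code satisfies
k ≤ n - 2d + 2. -/
theorem pure_singleton_bound (n k d : ℕ) (hn : 1 ≤ n) (hk : k ≤ n)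
    (C : AddSubgroup (Fin n → F4))
    (hso : (C : Set (Fin n → F4)) ⊆ trDual (C : Set (Fin n → F4)))
    (hcard : Nat.card C = 2 ^ (n - k))
    (hpure : ∀ v ∈ trDual (C : Set (Fin n → F4)), v ≠ 0 → d ≤ wt v) :
    (k : ℤ) ≤ (n : ℤ) - 2 * d + 2 := by
  classical
  set D := trDual (C : Set (Fin n → F4)) with hD
  have hDcard : 2 ^ (n + k) ≤ Nat.card D := card_trDual_ge n k hk C hcard
  set t := min (d - 1) n with ht
  obtain ⟨T0, hT0sub, hT0card⟩ := Finset.exists_subset_card_eq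
    (s := (Finset.univ : Finset (Fin n))) (n := t) (by simp [ht])
  have hsub : ∀ v w : Fin n → F4, v ∈ D → w ∈ D → (∀ j, j ∉ T0 → v j = w j) → v = w := by
    intro v w hv hw h
    by_contra hne
    have hx : v - w ∈ D := by
      intro z hz
      rw [trIP_sub_left, hv z hz, hw z hz, add_zero]
    have hxne : v - w ≠ 0 := sub_ne_zero.mpr hne
    have hwt := hpure _ hx hxne
    have hsupp : {j | (v - w) j ≠ 0} ⊆ (T0 : Set (Fin n)) := by
      intro j hj
      by_contra hjT
      exact hj (by simp [Pi.sub_apply, h j hjT, sub_self])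
    have hwtle : wt (v - w) ≤ t := by
      rw [← hT0card]
      calc wt (v - w) ≤ (T0 : Set (Fin n)).ncard :=
            Set.ncard_le_ncard hsupp (T0.finite_toSet)
        _ = T0.card := Set.ncard_coe_finset T0
    have hwt1 : 1 ≤ wt (v - w) := by
      obtain ⟨j, hj⟩ := Function.ne_iff.mp hxne
      have : 0 < Set.ncard {j | (v - w) j ≠ 0} := by
        rw [Set.ncard_pos (Set.toFinite _)]
        exact ⟨j, hj⟩
      exact this
    omega
  let g : D → ({j : Fin n // j ∉ T0} → F4) := fun v j => v.1 j.1
  have hginj : Function.Injective g := by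
    intro v w hvw
    apply Subtype.ext
    exact hsub _ _ v.2 w.2 (fun j hj => congrFun hvw ⟨j, hj⟩)
  have hcardle : Nat.card D ≤ 4 ^ (n - t) := by
    have h1 := Nat.card_le_card_of_injective g hginj
    have h2 : Nat.card ({j : Fin n // j ∉ T0} → F4) = 4 ^ (n - t) := by
      rw [Nat.card_eq_fintype_card, Fintype.card_fun, F4_card,
        Fintype.card_subtype_compl, Fintype.card_fin]
      congr 1
      have : Fintype.card {x : Fin n // x ∈ T0} = T0.card := Fintype.card_coe T0
      rw [this, hT0card]
    rwa [h2] at h1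
  have hfinal : 2 ^ (n + k) ≤ 2 ^ (2 * (n - t)) := by
    calc 2 ^ (n + k) ≤ 4 ^ (n - t) := le_trans hDcard hcardle
      _ = 2 ^ (2 * (n - t)) := by rw [show (4 : ℕ) = 2 ^ 2 by norm_num, ← pow_mul]
  have hexp : n + k ≤ 2 * (n - t) := (Nat.pow_le_pow_iff_right (by norm_num)).mp hfinal
  omega
end
end
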